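/- arXiv:1508.07230 — 3 statements merged into one kernel-verified Lean document; each statement's English description precedes it below -/
import Mathlib

section
/- Let ε > 0 be such that g(1/2 + ε) < 0 and 2ε ≤ 1, and set a := −g(1/2 + ε) > 0. Then for every natural number n ≥ 0, P(Z ≤ −n·a) ≥ (2ε)^(2ⁿ − 1) · P(Z ≤ 0)^(2ⁿ). (Iterated left-tail lower bound.) -/
open MeasureTheory ProbabilityTheory Real

/-- On a symmetric subinterval of `[0,1]`, `g` is maximized at the right endpoint. -/
lemma quicksort_g_bound_aux (g : ℝ → ℝ)
    (hg : ∀ u : ℝ, g u = 2 * u * Real.log u + 2 * (1 - u) * Real.log (1 - u) + 1)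
    (ε : ℝ) (hε : 0 < ε) (hε2 : 2 * ε ≤ 1) :
    ∀ u ∈ Set.Icc (1 / 2 - ε) (1 / 2 + ε), g u ≤ g (1 / 2 + ε) := by
  intro u hu
  set f : ℝ → ℝ := fun x => x * Real.log x with hf
  have hconv1 : ConvexOn ℝ (Set.Ici (0 : ℝ)) f := Real.convexOn_mul_log
  set L : ℝ →ᵃ[ℝ] ℝ := AffineMap.lineMap (1 : ℝ) (0 : ℝ) with hLdef
  have hL : ∀ t : ℝ, L t = 1 - t := by
    intro t
    simp [hLdef, AffineMap.lineMap_apply]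
    ring
  have hconv2 : ConvexOn ℝ (L ⁻¹' Set.Ici (0 : ℝ)) (f ∘ L) := hconv1.comp_affineMap L
  have hsub : Set.Icc (0 : ℝ) 1 ⊆ L ⁻¹' Set.Ici (0 : ℝ) := by
    intro x hx
    simp only [Set.mem_preimage, Set.mem_Ici, hL]
    linarith [hx.2]
  have hcomp : f ∘ L = fun x => f (1 - x) := by
    funext x; simp [Function.comp, hL]
  have hconv2' : ConvexOn ℝ (Set.Icc (0 : ℝ) 1) (fun x => f (1 - x)) := by
    rw [← hcomp]
    exact hconv2.subset hsub (convex_Icc 0 1)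
  have hconv1' : ConvexOn ℝ (Set.Icc (0 : ℝ) 1) f :=
    hconv1.subset (Set.Icc_subset_Ici_self) (convex_Icc 0 1)
  have hG : ConvexOn ℝ (Set.Icc (0 : ℝ) 1) (fun x => f x + f (1 - x)) :=
    hconv1'.add hconv2'
  set x : ℝ := 1 / 2 - ε with hxdef
  set y : ℝ := 1 / 2 + ε with hydef
  have hxmem : x ∈ Set.Icc (0 : ℝ) 1 := ⟨by simp [hxdef]; linarith, by simp [hxdef]; linarith⟩
  have hymem : y ∈ Set.Icc (0 : ℝ) 1 := ⟨by simp [hydef]; linarith, by simp [hydef]; linarith⟩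
  set t : ℝ := (y - u) / (2 * ε) with htdef
  set s : ℝ := (u - x) / (2 * ε) with hsdef
  have ht0 : 0 ≤ t := div_nonneg (by linarith [hu.2]) (by linarith)
  have hs0 : 0 ≤ s := div_nonneg (by linarith [hu.1]) (by linarith)
  have hts : t + s = 1 := by
    rw [htdef, hsdef, ← add_div, hxdef, hydef]
    field_simp
    ring
  have hcomb : t • x + s • y = u := by
    simp only [smul_eq_mul, htdef, hsdef, hxdef, hydef]
    field_simp
    ring
  have hkey := hG.2 hxmem hymem ht0 hs0 hts
  rw [hcomb] at hkey
  have hsymm : f x + f (1 - x) = f y + f (1 - y) := by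
    have h1 : (1 : ℝ) - x = y := by rw [hxdef, hydef]; ring
    have h2 : (1 : ℝ) - y = x := by rw [hxdef, hydef]; ring
    rw [h1, h2]; ring
  have hfinal : f u + f (1 - u) ≤ f y + f (1 - y) := by
    calc f u + f (1 - u) ≤ t * (f x + f (1 - x)) + s * (f y + f (1 - y)) := hkey
      _ = (t + s) * (f y + f (1 - y)) := by rw [hsymm]; ring
      _ = f y + f (1 - y) := by rw [hts]; ring
  have hgu : g u = 2 * (f u + f (1 - u)) + 1 := by rw [hg]; simp [hf]; ring
  have hgy : g y = 2 * (f y + f (1 - y)) + 1 := by rw [hg]; simp [hf]; ring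
  rw [hgu, hgy]
  linarith

/-- Iterated left-tail lower bound: if `ε > 0`, `g(1/2 + ε) < 0`,
`2ε ≤ 1` and `a := -g(1/2 + ε)`, then for every `n : ℕ`,
`P(Z ≤ -n·a) ≥ (2ε)^(2^n - 1) · P(Z ≤ 0)^(2^n)`. -/
theorem quicksort_left_tail_iterated_lower_bound
    {Ω : Type*} [MeasureSpace Ω] [IsProbabilityMeasure (ℙ : Measure Ω)]
    (Z Z' Z'' U : Ω → ℝ) (g : ℝ → ℝ)
    (hg : ∀ u : ℝ, g u = 2 * u * Real.log u + 2 * (1 - u) * Real.log (1 - u) + 1)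
    (hZm : Measurable Z) (hZ'm : Measurable Z') (hZ''m : Measurable Z'')
    (hUm : Measurable U)
    (hZ' : IdentDistrib Z' Z ℙ ℙ) (hZ'' : IdentDistrib Z'' Z ℙ ℙ)
    (hU : Measure.map U ℙ = volume.restrict (Set.Icc (0 : ℝ) 1))
    (hindep : iIndepFun ![U, Z', Z''] ℙ)
    (hrec : IdentDistrib Z (fun ω => U ω * Z' ω + (1 - U ω) * Z'' ω + g (U ω)) ℙ ℙ)
    (hmean : ∫ ω, Z ω ∂ℙ = 0)
    (hmgf : ∀ t : ℝ, Integrable (fun ω => Real.exp (t * Z ω)) ℙ)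
    (ε a : ℝ) (hε : 0 < ε) (hgε : g (1 / 2 + ε) < 0) (hε2 : 2 * ε ≤ 1)
    (ha : a = -g (1 / 2 + ε)) :
    ∀ n : ℕ,
      (2 * ε) ^ (2 ^ n - 1) * (ℙ {ω | Z ω ≤ 0}).toReal ^ (2 ^ n)
        ≤ (ℙ {ω | Z ω ≤ -(n * a)}).toReal := by
  have glem := quicksort_g_bound_aux g hg ε hε hε2
  -- one-step bound, in `ℝ≥0∞`
  have step : ∀ c : ℝ,
      ENNReal.ofReal (2 * ε) * ℙ {ω | Z ω ≤ c} * ℙ {ω | Z ω ≤ c} ≤ ℙ {ω | Z ω ≤ c - a} := by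
    intro c
    set A : Set Ω := U ⁻¹' Set.Icc (1 / 2 - ε) (1 / 2 + ε) with hAdef
    set B : Set Ω := Z' ⁻¹' Set.Iic c with hBdef
    set C : Set Ω := Z'' ⁻¹' Set.Iic c with hCdef
    have hmeas : ∀ i : Fin 3,
        MeasurableSet[Real.measurableSpace.comap (![U, Z', Z''] i)] (![A, B, C] i) := by
      intro i
      fin_cases i
      · exact ⟨Set.Icc (1 / 2 - ε) (1 / 2 + ε), measurableSet_Icc, rfl⟩
      · exact ⟨Set.Iic c, measurableSet_Iic, rfl⟩
      · exact ⟨Set.Iic c, measurableSet_Iic, rfl⟩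
    have hprod : ℙ (⋂ i, ![A, B, C] i) = ℙ A * ℙ B * ℙ C := by
      rw [hindep.meas_iInter hmeas, Fin.prod_univ_three]
      rfl
    have hA : ℙ A = ENNReal.ofReal (2 * ε) := by
      rw [hAdef, ← Measure.map_apply hUm measurableSet_Icc, hU,
        Measure.restrict_apply measurableSet_Icc,
        Set.inter_eq_self_of_subset_left (Set.Icc_subset_Icc (by linarith) (by linarith)),
        Real.volume_Icc]
      congr 1
      ring
    have hB : ℙ B = ℙ {ω | Z ω ≤ c} := hZ'.measure_mem_eq measurableSet_Iic
    have hC : ℙ C = ℙ {ω | Z ω ≤ c} := hZ''.measure_mem_eq measurableSet_Iic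
    have htarget : ℙ {ω | Z ω ≤ c - a}
        = ℙ {ω | U ω * Z' ω + (1 - U ω) * Z'' ω + g (U ω) ≤ c - a} :=
      hrec.measure_mem_eq measurableSet_Iic
    have hincl : (⋂ i, ![A, B, C] i)
        ⊆ {ω | U ω * Z' ω + (1 - U ω) * Z'' ω + g (U ω) ≤ c - a} := by
      intro ω hω
      have h0 : ω ∈ A := Set.mem_iInter.1 hω 0
      have h1 : ω ∈ B := Set.mem_iInter.1 hω 1
      have h2 : ω ∈ C := Set.mem_iInter.1 hω 2
      rw [hAdef, Set.mem_preimage] at h0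
      rw [hBdef, Set.mem_preimage, Set.mem_Iic] at h1
      rw [hCdef, Set.mem_preimage, Set.mem_Iic] at h2
      have hu0 : 0 ≤ U ω := le_trans (by linarith) h0.1
      have hu1 : U ω ≤ 1 := le_trans h0.2 (by linarith)
      have hgu : g (U ω) ≤ g (1 / 2 + ε) := glem (U ω) h0
      have hm1 : U ω * Z' ω ≤ U ω * c := mul_le_mul_of_nonneg_left h1 hu0
      have hm2 : (1 - U ω) * Z'' ω ≤ (1 - U ω) * c :=
        mul_le_mul_of_nonneg_left h2 (by linarith)
      have hcc : U ω * c + (1 - U ω) * c = c := by ring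
      simp only [Set.mem_setOf_eq]
      have hga : g (1 / 2 + ε) = -a := by rw [ha]; ring
      linarith
    calc ENNReal.ofReal (2 * ε) * ℙ {ω | Z ω ≤ c} * ℙ {ω | Z ω ≤ c}
        = ℙ A * ℙ B * ℙ C := by rw [hA, hB, hC]
      _ = ℙ (⋂ i, ![A, B, C] i) := hprod.symm
      _ ≤ ℙ {ω | U ω * Z' ω + (1 - U ω) * Z'' ω + g (U ω) ≤ c - a} := measure_mono hincl
      _ = ℙ {ω | Z ω ≤ c - a} := htarget.symm
  -- one-step bound, in `ℝ`
  have stepR : ∀ c : ℝ,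
      2 * ε * (ℙ {ω | Z ω ≤ c}).toReal ^ 2 ≤ (ℙ {ω | Z ω ≤ c - a}).toReal := by
    intro c
    have h := ENNReal.toReal_mono (measure_ne_top _ _) (step c)
    rw [ENNReal.toReal_mul, ENNReal.toReal_mul, ENNReal.toReal_ofReal (by linarith)] at h
    calc 2 * ε * (ℙ {ω | Z ω ≤ c}).toReal ^ 2
        = 2 * ε * (ℙ {ω | Z ω ≤ c}).toReal * (ℙ {ω | Z ω ≤ c}).toReal := by ring
      _ ≤ _ := h
  have hp0 : (0 : ℝ) ≤ (ℙ {ω | Z ω ≤ 0}).toReal := ENNReal.toReal_nonneg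
  intro n
  induction n with
  | zero =>
    simp only [pow_zero, Nat.sub_self, pow_one, one_mul, Nat.cast_zero, zero_mul, neg_zero]
    exact le_refl _
  | succ n ih =>
    have hset : {ω | Z ω ≤ -(((n : ℕ) + 1 : ℕ) * a)} = {ω | Z ω ≤ -((n : ℝ) * a) - a} := by
      ext ω
      simp only [Set.mem_setOf_eq, Nat.cast_add, Nat.cast_one]
      constructor <;> intro h <;> linarith
    rw [hset]
    have h1 : (1 : ℕ) ≤ 2 ^ n := Nat.one_le_two_pow
    have h2 : 2 ^ (n + 1) - 1 = (2 ^ n - 1) + (2 ^ n - 1) + 1 := by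
      rw [pow_succ]; omega
    have h3 : 2 ^ (n + 1) = 2 ^ n + 2 ^ n := by rw [pow_succ]; ring
    have hexp : (2 * ε) ^ (2 ^ (n + 1) - 1) * (ℙ {ω | Z ω ≤ 0}).toReal ^ (2 ^ (n + 1))
        = 2 * ε * ((2 * ε) ^ (2 ^ n - 1) * (ℙ {ω | Z ω ≤ 0}).toReal ^ (2 ^ n)) ^ 2 := by
      rw [h2, h3, pow_add, pow_add, pow_add, pow_one]
      ring
    rw [hexp]
    have hIHnn : (0 : ℝ) ≤ (2 * ε) ^ (2 ^ n - 1) * (ℙ {ω | Z ω ≤ 0}).toReal ^ (2 ^ n) :=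
      mul_nonneg (pow_nonneg (by linarith) _) (pow_nonneg hp0 _)
    have hsq : ((2 * ε) ^ (2 ^ n - 1) * (ℙ {ω | Z ω ≤ 0}).toReal ^ (2 ^ n)) ^ 2
        ≤ (ℙ {ω | Z ω ≤ -((n : ℝ) * a)}).toReal ^ 2 :=
      pow_le_pow_left₀ hIHnn ih 2
    calc 2 * ε * ((2 * ε) ^ (2 ^ n - 1) * (ℙ {ω | Z ω ≤ 0}).toReal ^ (2 ^ n)) ^ 2
        ≤ 2 * ε * (ℙ {ω | Z ω ≤ -((n : ℝ) * a)}).toReal ^ 2 :=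
          mul_le_mul_of_nonneg_left hsq (by linarith)
      _ ≤ (ℙ {ω | Z ω ≤ -((n : ℝ) * a) - a}).toReal := stepR _
end

section
/- There exists δ₀ ∈ (0, 1/2) such that for every δ with 0 < δ ≤ δ₀ and every z ≥ 0, P(Z ≥ z + 1 − δ·z − 3δ·ln(1/δ)) ≥ δ · P(Z ≥ 0) · P(Z ≥ z). (Recursive inequality for the right tail.) -/
open MeasureTheory ProbabilityTheory Real

lemma qs_aux_mul_log {x δ : ℝ} (hx0 : 0 ≤ x) (hxδ : x ≤ δ) (hδ : δ ≤ Real.exp (-1)) :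
    δ * Real.log δ ≤ x * Real.log x := by
  rcases eq_or_lt_of_le hx0 with h0 | h0
  · rw [← h0]
    simp only [zero_mul]
    exact mul_nonpos_of_nonneg_of_nonpos (by linarith)
      (Real.log_nonpos (by linarith) (hδ.trans (by
        have := Real.exp_lt_one_iff.mpr (show (-1:ℝ) < 0 by norm_num); linarith)))
  · have hδ0 : 0 < δ := lt_of_lt_of_le h0 hxδ
    have h3 : Real.log δ ≤ -1 := by
      have := Real.log_le_log hδ0 hδ
      rwa [Real.log_exp] at this
    have h1 : Real.log δ - Real.log x ≤ δ / x - 1 := by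
      rw [← Real.log_div (ne_of_gt hδ0) (ne_of_gt h0)]
      exact Real.log_le_sub_one_of_pos (div_pos hδ0 h0)
    have h2 : x * (Real.log δ - Real.log x) ≤ δ - x := by
      calc x * (Real.log δ - Real.log x) ≤ x * (δ / x - 1) :=
            mul_le_mul_of_nonneg_left h1 (le_of_lt h0)
        _ = δ - x := by field_simp
    nlinarith [mul_nonneg (sub_nonneg.mpr hxδ) (by linarith : (0:ℝ) ≤ -1 - Real.log δ)]

lemma qs_exp_neg_four_lt_half : Real.exp (-4) < 1/2 := by
  have h : (4:ℝ) + 1 ≤ Real.exp 4 := Real.add_one_le_exp 4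
  rw [Real.exp_neg, inv_lt_comm₀ (Real.exp_pos 4) (by norm_num)]
  linarith

lemma qs_aux_g {δ u : ℝ} (hδ0 : 0 < δ) (hδ : δ ≤ Real.exp (-4)) (hu1 : 1 - δ ≤ u) (hu2 : u ≤ 1) :
    1 + 3 * δ * Real.log δ ≤ 2 * u * Real.log u + 2 * (1 - u) * Real.log (1 - u) + 1 := by
  have hexp1 : Real.exp (-4) ≤ Real.exp (-1) := Real.exp_le_exp.mpr (by norm_num)
  have hδ1 : δ < 1/2 := lt_of_le_of_lt hδ qs_exp_neg_four_lt_half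
  have hu0 : 0 < u := by linarith
  have hA : δ * Real.log δ ≤ (1 - u) * Real.log (1 - u) :=
    qs_aux_mul_log (by linarith) (by linarith) (hδ.trans hexp1)
  have hlogu0 : Real.log u ≤ 0 := Real.log_nonpos hu0.le hu2
  have hB : Real.log u ≤ u * Real.log u := by nlinarith
  have hlogmono : Real.log (1 - δ) ≤ Real.log u := Real.log_le_log (by linarith) hu1
  have hD : -2 * δ ≤ Real.log (1 - δ) := by
    have hpos : (0:ℝ) < 1 - δ := by linarith
    have h1 : Real.log (1 - δ)⁻¹ ≤ (1 - δ)⁻¹ - 1 :=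
      Real.log_le_sub_one_of_pos (by positivity)
    rw [Real.log_inv] at h1
    have h2 : (1 - δ)⁻¹ - 1 ≤ 2 * δ := by
      rw [sub_le_iff_le_add, inv_le_iff_one_le_mul₀ hpos]
      nlinarith
    linarith
  have hE : Real.log δ ≤ -4 := by
    have := Real.log_le_log hδ0 hδ
    rwa [Real.log_exp] at this
  have hF : δ * Real.log δ ≤ -4 * δ := by nlinarith
  nlinarith

lemma qs_aux_pointwise {δ u zv z' z'' : ℝ} (hδ0 : 0 < δ) (hδ : δ ≤ Real.exp (-4))
    (hz : 0 ≤ zv) (hu1 : 1 - δ ≤ u) (hu2 : u ≤ 1) (hz' : zv ≤ z') (hz'' : 0 ≤ z'') :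
    zv + 1 - δ * zv - 3 * δ * Real.log (1 / δ) ≤
      u * z' + (1 - u) * z'' + (2 * u * Real.log u + 2 * (1 - u) * Real.log (1 - u) + 1) := by
  have hg := qs_aux_g hδ0 hδ hu1 hu2
  have hδ1 : δ < 1/2 := lt_of_le_of_lt hδ qs_exp_neg_four_lt_half
  have hlog : Real.log (1/δ) = - Real.log δ := by rw [one_div, Real.log_inv]
  have h1 : (1 - δ) * zv ≤ u * z' := by
    nlinarith [mul_nonneg (by linarith : (0:ℝ) ≤ u - (1 - δ)) (by linarith : (0:ℝ) ≤ z'),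
      mul_nonneg (by linarith : (0:ℝ) ≤ 1 - δ) (by linarith : (0:ℝ) ≤ z' - zv)]
  have h2 : 0 ≤ (1 - u) * z'' := mul_nonneg (by linarith) hz''
  rw [hlog]
  nlinarith

/-- Recursive inequality for the right tail: there is
`δ₀ ∈ (0, 1/2)` such that for all `0 < δ ≤ δ₀` and all `z ≥ 0`,
`P(Z ≥ z + 1 - δ·z - 3δ·ln(1/δ)) ≥ δ · P(Z ≥ 0) · P(Z ≥ z)`. -/
theorem quicksort_right_tail_recursive_inequality
    {Ω : Type*} [MeasureSpace Ω] [IsProbabilityMeasure (ℙ : Measure Ω)]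
    (Z Z' Z'' U : Ω → ℝ) (g : ℝ → ℝ)
    (hg : ∀ u : ℝ, g u = 2 * u * Real.log u + 2 * (1 - u) * Real.log (1 - u) + 1)
    (hZm : Measurable Z) (hZ'm : Measurable Z') (hZ''m : Measurable Z'')
    (hUm : Measurable U)
    (hZ' : IdentDistrib Z' Z ℙ ℙ) (hZ'' : IdentDistrib Z'' Z ℙ ℙ)
    (hU : Measure.map U ℙ = volume.restrict (Set.Icc (0 : ℝ) 1))
    (hindep : iIndepFun ![U, Z', Z''] ℙ)
    (hrec : IdentDistrib Z (fun ω => U ω * Z' ω + (1 - U ω) * Z'' ω + g (U ω)) ℙ ℙ)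
    (hmean : ∫ ω, Z ω ∂ℙ = 0)
    (hmgf : ∀ t : ℝ, Integrable (fun ω => Real.exp (t * Z ω)) ℙ) :
    ∃ δ₀ ∈ Set.Ioo (0 : ℝ) (1 / 2), ∀ δ : ℝ, 0 < δ → δ ≤ δ₀ → ∀ z ≥ (0 : ℝ),
      δ * (ℙ {ω | 0 ≤ Z ω}).toReal * (ℙ {ω | z ≤ Z ω}).toReal
        ≤ (ℙ {ω | z + 1 - δ * z - 3 * δ * Real.log (1 / δ) ≤ Z ω}).toReal := by
  refine ⟨Real.exp (-4), ⟨Real.exp_pos _, qs_exp_neg_four_lt_half⟩, ?_⟩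
  intro δ hδ0 hδle z hz
  have hδ1 : δ < 1/2 := lt_of_le_of_lt hδle qs_exp_neg_four_lt_half
  set t := z + 1 - δ * z - 3 * δ * Real.log (1 / δ) with ht
  set A := U ⁻¹' Set.Icc (1-δ) 1 ∩ (Z' ⁻¹' Set.Ici z ∩ Z'' ⁻¹' Set.Ici 0) with hAdef
  -- independence computation
  have hPA : ℙ A = ENNReal.ofReal δ * (ℙ (Z' ⁻¹' Set.Ici z) * ℙ (Z'' ⁻¹' Set.Ici 0)) := by
    have key := hindep.measure_inter_preimage_eq_mul (S := Finset.univ)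
      (sets := ![Set.Icc (1-δ) 1, Set.Ici z, Set.Ici 0])
      (fun i _ => by fin_cases i <;> simp [measurableSet_Icc, measurableSet_Ici])
    simp only [Fin.prod_univ_three, Matrix.cons_val_zero, Matrix.cons_val_one, Matrix.head_cons,
      Matrix.cons_val_two, Matrix.tail_cons, Finset.mem_univ, Set.iInter_true] at key
    have hiInter : (⋂ i, ![U, Z', Z''] i ⁻¹' ![Set.Icc (1-δ) 1, Set.Ici z, Set.Ici 0] i)
        = A := by
      ext ω
      simp [hAdef, Fin.forall_fin_succ, Set.mem_iInter, and_assoc]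
    have hpU : ℙ (U ⁻¹' Set.Icc (1-δ) 1) = ENNReal.ofReal δ := by
      rw [← Measure.map_apply hUm measurableSet_Icc, hU,
        Measure.restrict_apply measurableSet_Icc,
        Set.inter_eq_left.mpr (Set.Icc_subset_Icc (by linarith) le_rfl),
        Real.volume_Icc]
      norm_num
    rw [hiInter, hpU] at key
    rw [key]; ring
  -- inclusion in the target event
  have hsub : A ⊆ (fun ω => U ω * Z' ω + (1 - U ω) * Z'' ω + g (U ω)) ⁻¹' Set.Ici t := by
    rintro ω ⟨⟨hu1, hu2⟩, hz', hz''⟩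
    simp only [Set.mem_preimage, Set.mem_Ici]
    rw [hg]
    exact qs_aux_pointwise hδ0 hδle hz hu1 hu2 hz' hz''
  have hW : ℙ (Z ⁻¹' Set.Ici t)
      = ℙ ((fun ω => U ω * Z' ω + (1 - U ω) * Z'' ω + g (U ω)) ⁻¹' Set.Ici t) :=
    hrec.measure_mem_eq measurableSet_Ici
  have hZ'eq : ℙ (Z' ⁻¹' Set.Ici z) = ℙ (Z ⁻¹' Set.Ici z) :=
    hZ'.measure_mem_eq measurableSet_Ici
  have hZ''eq : ℙ (Z'' ⁻¹' Set.Ici 0) = ℙ (Z ⁻¹' Set.Ici 0) :=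
    hZ''.measure_mem_eq measurableSet_Ici
  have hle : ℙ A ≤ ℙ (Z ⁻¹' Set.Ici t) := by
    rw [hW]; exact measure_mono hsub
  have hfin : (ℙ A).toReal ≤ (ℙ (Z ⁻¹' Set.Ici t)).toReal :=
    ENNReal.toReal_mono (measure_ne_top _ _) hle
  rw [hPA, hZ'eq, hZ''eq, ENNReal.toReal_mul, ENNReal.toReal_mul,
    ENNReal.toReal_ofReal hδ0.le] at hfin
  have e1 : {ω | 0 ≤ Z ω} = Z ⁻¹' Set.Ici 0 := rfl
  have e2 : {ω | z ≤ Z ω} = Z ⁻¹' Set.Ici z := rfl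
  have e3 : {ω | z + 1 - δ * z - 3 * δ * Real.log (1 / δ) ≤ Z ω} = Z ⁻¹' Set.Ici t := rfl
  rw [e1, e2, e3]
  nlinarith [ENNReal.toReal_nonneg (a := ℙ (Z ⁻¹' Set.Ici z)),
    ENNReal.toReal_nonneg (a := ℙ (Z ⁻¹' Set.Ici 0))]
end

section
/- For every x > 0, P(Z ≤ −x) > 0 and P(Z ≥ x) > 0; that is, both tails of the limiting Quicksort distribution are strictly positive at every level. -/
open MeasureTheory ProbabilityTheory Real

lemma g_near_zero {u : ℝ} (hu : 0 < u) (hu' : u ≤ 1/4096) :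
    (1/2 : ℝ) ≤ 2*u*Real.log u + 2*(1-u)*Real.log (1-u) + 1 := by
  set s := Real.sqrt u with hs_def
  have hs : 0 < s := Real.sqrt_pos.mpr hu
  have hsq : s ^ 2 = u := Real.sq_sqrt hu.le
  have hs64 : s ≤ 1/64 := by nlinarith [hs.le]
  have hlog : Real.log u = 2 * Real.log s := by
    rw [← hsq, Real.log_pow]; push_cast; ring
  have h0 := Real.log_le_sub_one_of_pos (show (0:ℝ) < 1/s by positivity)
  rw [one_div, Real.log_inv] at h0
  have h1 : s - 1 ≤ s * Real.log s := by
    have h2 := mul_le_mul_of_nonneg_left h0 hs.le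
    have h3 : s * s⁻¹ = 1 := mul_inv_cancel₀ hs.ne'
    nlinarith
  have hA : -(1/16 : ℝ) ≤ 2*u*Real.log u := by
    have hval : 2*u*Real.log u = 4 * s * (s * Real.log s) := by
      rw [hlog, ← hsq]; ring
    nlinarith [hs.le]
  have hB : -(1/1024 : ℝ) ≤ 2*(1-u)*Real.log (1-u) := by
    have h2 : 0 < 1 - u := by linarith
    have h3 := Real.log_le_sub_one_of_pos (show (0:ℝ) < (1-u)⁻¹ by positivity)
    rw [Real.log_inv] at h3
    have h4 : (1-u)⁻¹ ≤ 2 := by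
      rw [inv_le_comm₀ h2 (by norm_num)]; linarith
    have h5 : -(2*u) ≤ Real.log (1-u) := by
      have e : (1-u) * (1-u)⁻¹ = 1 := mul_inv_cancel₀ h2.ne'
      nlinarith
    have h6 : Real.log (1-u) ≤ 0 := Real.log_nonpos (by linarith) (by linarith)
    nlinarith [mul_nonneg hu.le (neg_nonneg.mpr h6)]
  linarith

lemma vlogv_le {v : ℝ} (h1 : 49/100 ≤ v) (h2 : v ≤ 51/100) :
    v * Real.log v ≤ -(7/25) := by
  set s := Real.sqrt v with hs_def
  have hv : (0:ℝ) < v := by linarith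
  have hs : 0 < s := Real.sqrt_pos.mpr hv
  have hsq : s ^ 2 = v := Real.sq_sqrt hv.le
  have hs57 : s ≤ 5/7 := by nlinarith [hs.le]
  have hlog : Real.log v = 2 * Real.log s := by
    rw [← hsq, Real.log_pow]; push_cast; ring
  have h3 := Real.log_le_sub_one_of_pos hs
  have h4 : Real.log v ≤ -(4/7) := by rw [hlog]; linarith
  nlinarith

lemma g_near_half {u : ℝ} (h1 : 49/100 ≤ u) (h2 : u ≤ 51/100) :
    2*u*Real.log u + 2*(1-u)*Real.log (1-u) + 1 ≤ -(3/25) := by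
  have hA := vlogv_le h1 h2
  have hB := vlogv_le (show (49:ℝ)/100 ≤ 1 - u by linarith) (by linarith)
  linarith

/-- Both tails of the limiting Quicksort distribution are strictly
positive at every level: for every `x > 0`, `P(Z ≤ -x) > 0` and `P(Z ≥ x) > 0`. -/
theorem quicksort_tails_positive
    {Ω : Type*} [MeasureSpace Ω] [IsProbabilityMeasure (ℙ : Measure Ω)]
    (Z Z' Z'' U : Ω → ℝ) (g : ℝ → ℝ)
    (hg : ∀ u : ℝ, g u = 2 * u * Real.log u + 2 * (1 - u) * Real.log (1 - u) + 1)
    (hZm : Measurable Z) (hZ'm : Measurable Z') (hZ''m : Measurable Z'')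
    (hUm : Measurable U)
    (hZ' : IdentDistrib Z' Z ℙ ℙ) (hZ'' : IdentDistrib Z'' Z ℙ ℙ)
    (hU : Measure.map U ℙ = volume.restrict (Set.Icc (0 : ℝ) 1))
    (hindep : iIndepFun ![U, Z', Z''] ℙ)
    (hrec : IdentDistrib Z (fun ω => U ω * Z' ω + (1 - U ω) * Z'' ω + g (U ω)) ℙ ℙ)
    (hmean : ∫ ω, Z ω ∂ℙ = 0)
    (hmgf : ∀ t : ℝ, Integrable (fun ω => Real.exp (t * Z ω)) ℙ) :
    ∀ x > (0 : ℝ), 0 < ℙ {ω | Z ω ≤ -x} ∧ 0 < ℙ {ω | x ≤ Z ω} := by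
  have hexists_hi : ∃ y : ℝ, ℙ {ω | y ≤ Z ω} ≠ 0 := by
    by_contra h
    push_neg at h
    have huniv : (⋃ n : ℕ, {ω | -(n:ℝ) ≤ Z ω}) = Set.univ := by
      ext ω
      simp only [Set.mem_iUnion, Set.mem_univ, iff_true, Set.mem_setOf_eq]
      obtain ⟨n, hn⟩ := exists_nat_ge (-(Z ω))
      exact ⟨n, by linarith⟩
    have h2 := measure_iUnion_null (fun n : ℕ => h (-(n:ℝ)))
    rw [huniv] at h2
    simpa using h2
  have hexists_lo : ∃ y : ℝ, ℙ {ω | Z ω ≤ y} ≠ 0 := by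
    by_contra h
    push_neg at h
    have huniv : (⋃ n : ℕ, {ω | Z ω ≤ (n:ℝ)}) = Set.univ := by
      ext ω
      simp only [Set.mem_iUnion, Set.mem_univ, iff_true, Set.mem_setOf_eq]
      exact exists_nat_ge (Z ω)
    have h2 := measure_iUnion_null (fun n : ℕ => h (n:ℝ))
    rw [huniv] at h2
    simpa using h2
  -- a reusable computation of the probability of the joint event
  have hjoint : ∀ (sU sZ : Set ℝ), MeasurableSet sU → MeasurableSet sZ →
      ℙ (U ⁻¹' sU ∩ Z' ⁻¹' sZ ∩ Z'' ⁻¹' sZ)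
        = ℙ (U ⁻¹' sU) * ℙ (Z' ⁻¹' sZ) * ℙ (Z'' ⁻¹' sZ) := by
    intro sU sZ hsU hsZ
    have hprod := hindep.measure_inter_preimage_eq_mul (S := Finset.univ)
      (sets := ![sU, sZ, sZ])
      (fun i _ => by fin_cases i <;> simpa using (by first | exact hsU | exact hsZ))
    have he : (⋂ i ∈ (Finset.univ : Finset (Fin 3)),
        (![U, Z', Z''] i ⁻¹' (![sU, sZ, sZ] i)))
        = U ⁻¹' sU ∩ Z' ⁻¹' sZ ∩ Z'' ⁻¹' sZ := by
      ext ω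
      simp [Fin.forall_fin_succ, and_assoc]
    rw [he, Fin.prod_univ_three] at hprod
    simpa using hprod
  intro x hx
  constructor
  · -- left tail
    rw [pos_iff_ne_zero]
    intro h0
    set T : Set ℝ := {y | ℙ {ω | Z ω ≤ y} = 0} with hTdef
    have hxT : -x ∈ T := h0
    obtain ⟨y₀, hy₀⟩ := hexists_lo
    have hbdd : BddAbove T := by
      refine ⟨y₀, fun y hy => ?_⟩
      by_contra hlt
      push_neg at hlt
      exact hy₀ (measure_mono_null
        (fun ω (hω : Z ω ≤ y₀) => le_trans hω hlt.le) hy)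
    set m := sSup T with hm
    have hdown : ∀ z, z < m → ℙ {ω | Z ω ≤ z} = 0 := by
      intro z hz
      obtain ⟨y, hyT, hyz⟩ := (lt_csSup_iff hbdd ⟨-x, hxT⟩).mp hz
      exact measure_mono_null (fun ω (hω : Z ω ≤ z) => le_trans hω hyz.le) hyT
    have habove : ℙ {ω | Z ω ≤ m + 1/100} ≠ 0 := by
      intro hcontra
      have : m + 1/100 ≤ m := le_csSup hbdd hcontra
      linarith
    -- event probability
    have hUp : ℙ (U ⁻¹' Set.Icc (49/100) (51/100)) ≠ 0 := by
      rw [← Measure.map_apply hUm measurableSet_Icc, hU,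
        Measure.restrict_apply measurableSet_Icc]
      have he : Set.Icc (49/100 : ℝ) (51/100) ∩ Set.Icc 0 1
          = Set.Icc (49/100) (51/100) := by
        rw [Set.inter_eq_left]
        intro y hy
        exact ⟨by linarith [hy.1], by linarith [hy.2]⟩
      rw [he, Real.volume_Icc]
      simp only [ne_eq, ENNReal.ofReal_eq_zero, not_le]
      norm_num
    have hZ'p : ℙ (Z' ⁻¹' Set.Iic (m + 1/100)) ≠ 0 := by
      rw [hZ'.measure_mem_eq measurableSet_Iic]; exact habove
    have hZ''p : ℙ (Z'' ⁻¹' Set.Iic (m + 1/100)) ≠ 0 := by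
      rw [hZ''.measure_mem_eq measurableSet_Iic]; exact habove
    have hA_ne : ℙ (U ⁻¹' Set.Icc (49/100) (51/100) ∩ Z' ⁻¹' Set.Iic (m + 1/100)
        ∩ Z'' ⁻¹' Set.Iic (m + 1/100)) ≠ 0 := by
      rw [hjoint _ _ measurableSet_Icc measurableSet_Iic]
      exact mul_ne_zero (mul_ne_zero hUp hZ'p) hZ''p
    have hsub : U ⁻¹' Set.Icc (49/100) (51/100) ∩ Z' ⁻¹' Set.Iic (m + 1/100)
        ∩ Z'' ⁻¹' Set.Iic (m + 1/100)
        ⊆ (fun ω => U ω * Z' ω + (1 - U ω) * Z'' ω + g (U ω)) ⁻¹'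
          Set.Iic (m - 11/100) := by
      rintro ω ⟨⟨hU1, hZ'1⟩, hZ''1⟩
      have hu1 : (49/100 : ℝ) ≤ U ω := hU1.1
      have hu2 : U ω ≤ 51/100 := hU1.2
      have hgle : g (U ω) ≤ -(3/25) := by
        rw [hg]; exact g_near_half hu1 hu2
      have hZ'le : Z' ω ≤ m + 1/100 := hZ'1
      have hZ''le : Z'' ω ≤ m + 1/100 := hZ''1
      have hm1 := mul_le_mul_of_nonneg_left hZ'le (by linarith : (0:ℝ) ≤ U ω)
      have hm2 := mul_le_mul_of_nonneg_left hZ''le (by linarith : (0:ℝ) ≤ 1 - U ω)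
      show U ω * Z' ω + (1 - U ω) * Z'' ω + g (U ω) ≤ m - 11/100
      nlinarith
    have hVz : ℙ ((fun ω => U ω * Z' ω + (1 - U ω) * Z'' ω + g (U ω)) ⁻¹'
        Set.Iic (m - 11/100)) = 0 := by
      rw [← hrec.measure_mem_eq measurableSet_Iic]
      exact hdown _ (by linarith)
    exact hA_ne (measure_mono_null hsub hVz)
  · -- right tail
    rw [pos_iff_ne_zero]
    intro h0
    set S : Set ℝ := {y | ℙ {ω | y ≤ Z ω} = 0} with hSdef
    have hxS : x ∈ S := h0
    obtain ⟨y₀, hy₀⟩ := hexists_hi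
    have hbdd : BddBelow S := by
      refine ⟨y₀, fun y hy => ?_⟩
      by_contra hlt
      push_neg at hlt
      exact hy₀ (measure_mono_null
        (fun ω (hω : y₀ ≤ Z ω) => le_trans hlt.le hω) hy)
    set M := sInf S with hM
    have hup : ∀ z, M < z → ℙ {ω | z ≤ Z ω} = 0 := by
      intro z hz
      obtain ⟨y, hyS, hyz⟩ := (csInf_lt_iff hbdd ⟨x, hxS⟩).mp hz
      exact measure_mono_null (fun ω (hω : z ≤ Z ω) => le_trans hyz.le hω) hyS
    have hbelow : ℙ {ω | M - 1/8 ≤ Z ω} ≠ 0 := by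
      intro hcontra
      have : M ≤ M - 1/8 := csInf_le hbdd hcontra
      linarith
    have hUp : ℙ (U ⁻¹' Set.Ioc 0 (1/4096)) ≠ 0 := by
      rw [← Measure.map_apply hUm measurableSet_Ioc, hU,
        Measure.restrict_apply measurableSet_Ioc]
      have he : Set.Ioc (0 : ℝ) (1/4096) ∩ Set.Icc 0 1
          = Set.Ioc 0 (1/4096) := by
        rw [Set.inter_eq_left]
        intro y hy
        exact ⟨hy.1.le, by linarith [hy.2]⟩
      rw [he, Real.volume_Ioc]
      simp only [ne_eq, ENNReal.ofReal_eq_zero, not_le]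
      norm_num
    have hZ'p : ℙ (Z' ⁻¹' Set.Ici (M - 1/8)) ≠ 0 := by
      rw [hZ'.measure_mem_eq measurableSet_Ici]; exact hbelow
    have hZ''p : ℙ (Z'' ⁻¹' Set.Ici (M - 1/8)) ≠ 0 := by
      rw [hZ''.measure_mem_eq measurableSet_Ici]; exact hbelow
    have hA_ne : ℙ (U ⁻¹' Set.Ioc 0 (1/4096) ∩ Z' ⁻¹' Set.Ici (M - 1/8)
        ∩ Z'' ⁻¹' Set.Ici (M - 1/8)) ≠ 0 := by
      rw [hjoint _ _ measurableSet_Ioc measurableSet_Ici]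
      exact mul_ne_zero (mul_ne_zero hUp hZ'p) hZ''p
    have hsub : U ⁻¹' Set.Ioc 0 (1/4096) ∩ Z' ⁻¹' Set.Ici (M - 1/8)
        ∩ Z'' ⁻¹' Set.Ici (M - 1/8)
        ⊆ (fun ω => U ω * Z' ω + (1 - U ω) * Z'' ω + g (U ω)) ⁻¹'
          Set.Ici (M + 1/4) := by
      rintro ω ⟨⟨hU1, hZ'1⟩, hZ''1⟩
      have hu1 : (0 : ℝ) < U ω := hU1.1
      have hu2 : U ω ≤ 1/4096 := hU1.2
      have hgge : (1/2 : ℝ) ≤ g (U ω) := by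
        rw [hg]; exact g_near_zero hu1 hu2
      have hZ'ge : M - 1/8 ≤ Z' ω := hZ'1
      have hZ''ge : M - 1/8 ≤ Z'' ω := hZ''1
      have hm1 := mul_le_mul_of_nonneg_left hZ'ge hu1.le
      have hm2 := mul_le_mul_of_nonneg_left hZ''ge (by linarith : (0:ℝ) ≤ 1 - U ω)
      show M + 1/4 ≤ U ω * Z' ω + (1 - U ω) * Z'' ω + g (U ω)
      nlinarith
    have hVz : ℙ ((fun ω => U ω * Z' ω + (1 - U ω) * Z'' ω + g (U ω)) ⁻¹'
        Set.Ici (M + 1/4)) = 0 := by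
      rw [← hrec.measure_mem_eq measurableSet_Ici]
      exact hup _ (by linarith)
    exact hA_ne (measure_mono_null hsub hVz)
end
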